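/- The map x ↦ ld_HR(x; X, τ) is upper semicontinuous on R^p for any random vector X and any fixed nonnegative τ. -/

import Mathlib

open MeasureTheory Filter Topology
open scoped ENNReal

variable {p : ℕ}

/-- Lower box `[x - τ, x]` (componentwise). -/
def lowerBox (x τ : Fin p → ℝ) : Set (Fin p → ℝ) :=
  {z | ∀ j, x j - τ j ≤ z j ∧ z j ≤ x j}

/-- Upper box `[x, x + τ]` (componentwise). -/
def upperBox (x τ : Fin p → ℝ) : Set (Fin p → ℝ) :=
  {z | ∀ j, x j ≤ z j ∧ z j ≤ x j + τ j}

/-- Local half-region depth in `ℝ^p`. -/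
noncomputable def ldHR (μ : Measure (Fin p → ℝ)) (x τ : Fin p → ℝ) : ℝ≥0∞ :=
  min (μ (lowerBox x τ)) (μ (upperBox x τ))

/-- Half-region depth in `ℝ^p`. -/
noncomputable def dHR (μ : Measure (Fin p → ℝ)) (x : Fin p → ℝ) : ℝ≥0∞ :=
  min (μ {z | ∀ j, z j ≤ x j}) (μ {z | ∀ j, x j ≤ z j})

lemma aux_usc {p : ℕ} (μ : Measure (Fin p → ℝ)) [IsFiniteMeasure μ] (a b : Fin p → ℝ) :
    UpperSemicontinuous (fun x : Fin p → ℝ =>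
      μ {z | ∀ j, x j + a j ≤ z j ∧ z j ≤ x j + b j}) := by
  intro x y hy
  set S : ℕ → Set (Fin p → ℝ) := fun n =>
    {z | ∀ j, x j + a j - 1 / (n + 1) ≤ z j ∧ z j ≤ x j + b j + 1 / (n + 1)} with hS
  have hclosed : ∀ n, IsClosed (S n) := by
    intro n
    have : S n = ⋂ j, {z : Fin p → ℝ |
        x j + a j - 1 / (n + 1) ≤ z j ∧ z j ≤ x j + b j + 1 / (n + 1)} := by
      ext z; simp [hS, Set.mem_iInter]
    rw [this]
    refine isClosed_iInter fun j => ?_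
    exact (isClosed_le continuous_const (continuous_apply j)).inter
      (isClosed_le (continuous_apply j) continuous_const)
  have hanti : Antitone S := by
    intro m n hmn z hz j
    have h1 : (1 : ℝ) / (n + 1) ≤ 1 / (m + 1) := by
      apply one_div_le_one_div_of_le
      · positivity
      · have : (m : ℝ) ≤ n := Nat.cast_le.2 hmn
        linarith
    exact ⟨by linarith [(hz j).1], by linarith [(hz j).2]⟩
  have hinter : ⋂ n, S n = {z | ∀ j, x j + a j ≤ z j ∧ z j ≤ x j + b j} := by
    ext z
    simp only [Set.mem_iInter, hS, Set.mem_setOf_eq]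
    constructor
    · intro h j
      have hz0 := tendsto_one_div_add_atTop_nhds_zero_nat (𝕜 := ℝ)
      have ht1 : Tendsto (fun n : ℕ => x j + a j - 1 / (n + 1)) atTop (𝓝 (x j + a j)) := by
        simpa using (tendsto_const_nhds (x := x j + a j) (f := atTop)).sub hz0
      have ht2 : Tendsto (fun n : ℕ => x j + b j + 1 / (n + 1)) atTop (𝓝 (x j + b j)) := by
        simpa using (tendsto_const_nhds (x := x j + b j) (f := atTop)).add hz0
      exact ⟨le_of_tendsto' ht1 (fun n => (h n j).1),
        ge_of_tendsto' ht2 (fun n => (h n j).2)⟩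
    · intro h n j
      have hpos : (0:ℝ) < 1 / (n + 1) := by positivity
      exact ⟨by linarith [(h j).1], by linarith [(h j).2]⟩
  have htend : Tendsto (μ ∘ S) atTop (𝓝 (μ (⋂ n, S n))) :=
    tendsto_measure_iInter_atTop (fun n => ((hclosed n).measurableSet).nullMeasurableSet)
      hanti ⟨0, measure_ne_top μ _⟩
  rw [hinter] at htend
  have hev : ∀ᶠ n in atTop, μ (S n) < y := htend.eventually_lt_const hy
  obtain ⟨n, hn⟩ := hev.exists
  have hball : Metric.ball x (1 / (n + 1)) ∈ 𝓝 x :=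
    Metric.ball_mem_nhds x (by positivity)
  filter_upwards [hball] with x' hx'
  refine lt_of_le_of_lt (measure_mono ?_) hn
  intro z hz j
  have hd : |x' j - x j| < 1 / (n + 1) := by
    have := dist_le_pi_dist x' x j
    rw [Metric.mem_ball] at hx'
    calc |x' j - x j| = dist (x' j) (x j) := (Real.dist_eq _ _).symm
    _ ≤ dist x' x := this
    _ < _ := hx'
  have h1 := (hz j).1
  have h2 := (hz j).2
  have := abs_lt.1 hd
  exact ⟨by linarith, by linarith⟩

/-- The local half-region depth is upper semicontinuous in `x`. -/
theorem ldHR_upperSemicontinuous (μ : Measure (Fin p → ℝ)) [IsProbabilityMeasure μ]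
    (τ : Fin p → ℝ) (hτ : ∀ j, 0 ≤ τ j) :
    UpperSemicontinuous (fun x : Fin p → ℝ => ldHR μ x τ) := by
  have h1 := aux_usc μ (fun j => -τ j) (fun _ => 0)
  have h2 := aux_usc μ (fun _ => 0) τ
  have e1 : ∀ x : Fin p → ℝ,
      {z : Fin p → ℝ | ∀ j, x j + (-τ j) ≤ z j ∧ z j ≤ x j + 0} = lowerBox x τ := by
    intro x; ext z; simp [lowerBox, sub_eq_add_neg]
  have e2 : ∀ x : Fin p → ℝ,
      {z : Fin p → ℝ | ∀ j, x j + 0 ≤ z j ∧ z j ≤ x j + τ j} = upperBox x τ := by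
    intro x; ext z; simp [upperBox]
  simp only [e1] at h1
  simp only [e2] at h2
  intro x y hy
  simp only [ldHR, min_lt_iff] at hy
  rcases hy with hy | hy
  · filter_upwards [h1 x y hy] with x' hx'
    exact lt_of_le_of_lt (min_le_left _ _ : ldHR μ x' τ ≤ _) hx'
  · filter_upwards [h2 x y hy] with x' hx'
    exact lt_of_le_of_lt (min_le_right _ _ : ldHR μ x' τ ≤ _) hx'
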